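/- (Unique leader invariant in the NB-R-CM-to-protocol reduction) Let P be the rendez-vous protocol built from an NB-R-CM M as in Figure 9, with distinguished states {q} ∪ Q_M (where Q_M contains the machine locations and auxiliary transition states). For every initial configuration C_0 (all processes in q_in) and every configuration C reachable from C_0 in at least one step, the total number of processes in {q} ∪ Q_M is exactly 1: Σ_{p ∈ {q} ∪ Q_M} C(p) = 1. -/

import Mathlib

inductive RVAct (A : Type) where
  | tau : RVAct A
  | send : A → RVAct A
  | recv : A → RVAct A
  deriving DecidableEq

/-- One step of the non-blocking rendez-vous semantics. -/
inductive NBStep {Q A : Type} [DecidableEq Q] (T : Set (Q × RVAct A × Q)) :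
    Multiset Q → Multiset Q → Prop where
  | internal (C : Multiset Q) (q q' : Q)
      (ht : (q, RVAct.tau, q') ∈ T) (hq : 0 < C.count q) :
      NBStep T C (C - {q} + {q'})
  | rdv (C : Multiset Q) (m : A) (q1 q1' q2 q2' : Q)
      (ht1 : (q1, RVAct.send m, q1') ∈ T) (ht2 : (q2, RVAct.recv m, q2') ∈ T)
      (h1 : 0 < C.count q1) (h2 : 0 < C.count q2)
      (h12 : 2 ≤ C.count q1 + C.count q2) :
      NBStep T C (C - {q1, q2} + {q1', q2'})
  | nb (C : Multiset Q) (m : A) (q1 q1' : Q)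
      (ht : (q1, RVAct.send m, q1') ∈ T) (h1 : 0 < C.count q1)
      (hno : ∀ q2 q2', (q2, RVAct.recv m, q2') ∈ T → (C - {q1}).count q2 = 0) :
      NBStep T C (C - {q1} + {q1'})

/-- Actions of a counter machine: increment, decrement, or no-op (⊥). -/
inductive CAct (X : Type) where
  | inc : X → CAct X
  | dec : X → CAct X
  | nop : CAct X
  deriving DecidableEq

/-- States of the protocol built from an NB-R-CM (Figure 9). -/
inductive PState (L X : Type) where
  | qin : PState L X
  | q : PState L X
  | qbot : PState L X
  | loc : L → PState L X
  | aux : L × CAct X × L → PState L X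
  | one : X → PState L X
  | qx : X → PState L X
  | q'x : X → PState L X
  deriving DecidableEq

/-- Messages of the protocol built from an NB-R-CM. -/
inductive Msg (X : Type) where
  | incm : X → Msg X
  | ackinc : X → Msg X
  | decm : X → Msg X
  | ackdec : X → Msg X
  | nbdecm : X → Msg X
  | L : Msg X
  | R : Msg X
  deriving DecidableEq

/-- The transitions of the protocol built from the NB-R-CM
`(db, dnb, lin)`. -/
inductive PTrans {L X : Type} (db : Set (L × CAct X × L))
    (dnb : Set (L × X × L)) (lin : L) :
    PState L X → RVAct (Msg X) → PState L X → Prop where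
  | incSend (ℓi : L) (x : X) (ℓj : L) (h : (ℓi, CAct.inc x, ℓj) ∈ db) :
      PTrans db dnb lin (.loc ℓi) (.send (.incm x)) (.aux (ℓi, CAct.inc x, ℓj))
  | incAck (ℓi : L) (x : X) (ℓj : L) (h : (ℓi, CAct.inc x, ℓj) ∈ db) :
      PTrans db dnb lin (.aux (ℓi, CAct.inc x, ℓj)) (.recv (.ackinc x)) (.loc ℓj)
  | decSend (ℓi : L) (x : X) (ℓj : L) (h : (ℓi, CAct.dec x, ℓj) ∈ db) :
      PTrans db dnb lin (.loc ℓi) (.send (.decm x)) (.aux (ℓi, CAct.dec x, ℓj))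
  | decAck (ℓi : L) (x : X) (ℓj : L) (h : (ℓi, CAct.dec x, ℓj) ∈ db) :
      PTrans db dnb lin (.aux (ℓi, CAct.dec x, ℓj)) (.recv (.ackdec x)) (.loc ℓj)
  | nbdecSend (ℓi : L) (x : X) (ℓj : L) (h : (ℓi, x, ℓj) ∈ dnb) :
      PTrans db dnb lin (.loc ℓi) (.send (.nbdecm x)) (.loc ℓj)
  | tauStep (ℓi ℓj : L) (h : (ℓi, CAct.nop, ℓj) ∈ db) :
      PTrans db dnb lin (.loc ℓi) .tau (.loc ℓj)
  | initL : PTrans db dnb lin .qin (.send .L) .q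
  | qR : PTrans db dnb lin .q (.send .R) (.loc lin)
  | qL : PTrans db dnb lin .q (.recv .L) .qbot
  | locL (ℓ : L) : PTrans db dnb lin (.loc ℓ) (.recv .L) .qbot
  | auxL (δ : L × CAct X × L) (h : δ ∈ db) :
      PTrans db dnb lin (.aux δ) (.recv .L) .qbot
  | incRecv (x : X) : PTrans db dnb lin .qin (.recv (.incm x)) (.qx x)
  | incAckSend (x : X) : PTrans db dnb lin (.qx x) (.send (.ackinc x)) (.one x)
  | decRecv (x : X) : PTrans db dnb lin (.one x) (.recv (.decm x)) (.q'x x)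
  | decAckSend (x : X) : PTrans db dnb lin (.q'x x) (.send (.ackdec x)) .qin
  | nbdecRecv (x : X) : PTrans db dnb lin (.one x) (.recv (.nbdecm x)) .qin
  | qxR (x : X) : PTrans db dnb lin (.qx x) (.recv .R) .qin
  | q'xR (x : X) : PTrans db dnb lin (.q'x x) (.recv .R) .qin

/-- The transition set of the protocol of Figure 9, as a set. -/
def PTransSet {L X : Type} (db : Set (L × CAct X × L))
    (dnb : Set (L × X × L)) (lin : L) :
    Set (PState L X × RVAct (Msg X) × PState L X) :=
  {t | PTrans db dnb lin t.1 t.2.1 t.2.2}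

/-- The "leader zone" `{q} ∪ Q_M` of the protocol. -/
def isLeader {L X : Type} : PState L X → Bool
  | .q => true
  | .loc _ => true
  | .aux _ => true
  | _ => false

section UniqueLeaderAux

variable {L X : Type} [DecidableEq L] [DecidableEq X]

/-- The invariant: exactly one leader, and every auxiliary state present
comes from a transition of the machine. -/
def LeaderInv (db : Set (L × CAct X × L)) (C : Multiset (PState L X)) : Prop :=
  C.countP (fun s => isLeader s = true) = 1 ∧
  ∀ δ, PState.aux δ ∈ C → δ ∈ db

lemma decomp1 {Q : Type} [DecidableEq Q] (C : Multiset Q) (a : Q) (h : a ∈ C) :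
    ∃ D, C = a ::ₘ D ∧ C - {a} = D := by
  obtain ⟨D, rfl⟩ := Multiset.exists_cons_of_mem h
  exact ⟨D, rfl, by rw [Multiset.sub_singleton, Multiset.erase_cons_head]⟩

lemma decomp2 {Q : Type} [DecidableEq Q] (C : Multiset Q) (a b : Q) (hne : a ≠ b)
    (ha : a ∈ C) (hb : b ∈ C) :
    ∃ D, C = a ::ₘ b ::ₘ D ∧ C - {a, b} = D := by
  obtain ⟨D1, rfl⟩ := Multiset.exists_cons_of_mem ha
  have hb' : b ∈ D1 := by
    rcases Multiset.mem_cons.mp hb with h | h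
    · exact absurd h.symm hne
    · exact h
  obtain ⟨D, rfl⟩ := Multiset.exists_cons_of_mem hb'
  refine ⟨D, rfl, ?_⟩
  rw [Multiset.insert_eq_cons, Multiset.sub_cons, Multiset.erase_cons_head,
    Multiset.sub_singleton, Multiset.erase_cons_head]

lemma aux_upd {db : Set (L × CAct X × L)} {C D U : Multiset (PState L X)}
    (hC : ∀ δ, PState.aux δ ∈ C → δ ∈ db) (hDC : D ≤ C)
    (hU : ∀ δ, PState.aux δ ∈ U → δ ∈ db) :
    ∀ δ, PState.aux δ ∈ D + U → δ ∈ db := by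
  intro δ hδ
  rcases Multiset.mem_add.mp hδ with h | h
  · exact hC δ (Multiset.mem_of_le hDC h)
  · exact hU δ h

lemma leader_pres {db : Set (L × CAct X × L)} {dnb : Set (L × X × L)} {lin : L}
    {C C' : Multiset (PState L X)}
    (hinv : LeaderInv db C) (hstep : NBStep (PTransSet db dnb lin) C C') :
    LeaderInv db C' := by
  obtain ⟨hcount, haux⟩ := hinv
  cases hstep with
  | internal q1 q1' ht hq =>
    replace ht : PTrans db dnb lin q1 .tau q1' := ht
    obtain ⟨D, rfl, hD⟩ := decomp1 C q1 (Multiset.count_pos.mp hq)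
    rw [hD]
    cases ht with
    | tauStep ℓi ℓj h =>
      refine ⟨?_, aux_upd haux (Multiset.le_cons_self D _) ?_⟩
      · simp only [Multiset.insert_eq_cons, ← Multiset.cons_zero, Multiset.countP_add,
          Multiset.countP_cons, Multiset.countP_zero] at hcount ⊢
        simp_all [isLeader]
        all_goals omega
      · intro δ hδ; simp at hδ
  | nb m q1 q1' ht h1 hno =>
    replace ht : PTrans db dnb lin q1 (.send m) q1' := ht
    cases ht with
    | initL =>
      exfalso
      have hpos : 0 < (C.countP fun s => isLeader s = true) := by omega
      obtain ⟨s, hs, hps⟩ := Multiset.countP_pos.mp hpos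
      have key : ∀ q2 q2', PTrans db dnb lin q2 (.recv .L) q2' →
          q2 ≠ PState.qin → C.count q2 = 0 := by
        intro q2 q2' ht2 hne
        have h' := hno q2 q2' ht2
        rwa [Multiset.sub_singleton, Multiset.count_erase_of_ne hne] at h'
      have hzero : C.count s = 0 := by
        cases s with
        | q => exact key _ _ PTrans.qL (by simp)
        | loc ℓ => exact key _ _ (PTrans.locL ℓ) (by simp)
        | aux δ => exact key _ _ (PTrans.auxL δ (haux δ hs)) (by simp)
        | qin => simp [isLeader] at hps
        | qbot => simp [isLeader] at hps
        | one x => simp [isLeader] at hps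
        | qx x => simp [isLeader] at hps
        | q'x x => simp [isLeader] at hps
      exact absurd (Multiset.count_pos.mpr hs) (by omega)
    | qR =>
      obtain ⟨D, rfl, hD⟩ := decomp1 C _ (Multiset.count_pos.mp h1)
      rw [hD]
      refine ⟨?_, aux_upd haux (Multiset.le_cons_self D _) ?_⟩
      · simp only [Multiset.insert_eq_cons, ← Multiset.cons_zero, Multiset.countP_add,
          Multiset.countP_cons, Multiset.countP_zero] at hcount ⊢
        simp_all [isLeader]
        all_goals omega
      · intro δ hδ; simp at hδ
    | incSend ℓi x ℓj h =>
      obtain ⟨D, rfl, hD⟩ := decomp1 C _ (Multiset.count_pos.mp h1)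
      rw [hD]
      refine ⟨?_, aux_upd haux (Multiset.le_cons_self D _) ?_⟩
      · simp only [Multiset.insert_eq_cons, ← Multiset.cons_zero, Multiset.countP_add,
          Multiset.countP_cons, Multiset.countP_zero] at hcount ⊢
        simp_all [isLeader]
        all_goals omega
      · intro δ hδ; simp at hδ; subst hδ; exact h
    | decSend ℓi x ℓj h =>
      obtain ⟨D, rfl, hD⟩ := decomp1 C _ (Multiset.count_pos.mp h1)
      rw [hD]
      refine ⟨?_, aux_upd haux (Multiset.le_cons_self D _) ?_⟩
      · simp only [Multiset.insert_eq_cons, ← Multiset.cons_zero, Multiset.countP_add,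
          Multiset.countP_cons, Multiset.countP_zero] at hcount ⊢
        simp_all [isLeader]
        all_goals omega
      · intro δ hδ; simp at hδ; subst hδ; exact h
    | nbdecSend ℓi x ℓj h =>
      obtain ⟨D, rfl, hD⟩ := decomp1 C _ (Multiset.count_pos.mp h1)
      rw [hD]
      refine ⟨?_, aux_upd haux (Multiset.le_cons_self D _) ?_⟩
      · simp only [Multiset.insert_eq_cons, ← Multiset.cons_zero, Multiset.countP_add,
          Multiset.countP_cons, Multiset.countP_zero] at hcount ⊢
        simp_all [isLeader]
        all_goals omega
      · intro δ hδ; simp at hδ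
    | incAckSend x =>
      obtain ⟨D, rfl, hD⟩ := decomp1 C _ (Multiset.count_pos.mp h1)
      rw [hD]
      refine ⟨?_, aux_upd haux (Multiset.le_cons_self D _) ?_⟩
      · simp only [Multiset.insert_eq_cons, ← Multiset.cons_zero, Multiset.countP_add,
          Multiset.countP_cons, Multiset.countP_zero] at hcount ⊢
        simp_all [isLeader]
        all_goals omega
      · intro δ hδ; simp at hδ
    | decAckSend x =>
      obtain ⟨D, rfl, hD⟩ := decomp1 C _ (Multiset.count_pos.mp h1)
      rw [hD]
      refine ⟨?_, aux_upd haux (Multiset.le_cons_self D _) ?_⟩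
      · simp only [Multiset.insert_eq_cons, ← Multiset.cons_zero, Multiset.countP_add,
          Multiset.countP_cons, Multiset.countP_zero] at hcount ⊢
        simp_all [isLeader]
        all_goals omega
      · intro δ hδ; simp at hδ
  | rdv m q1 q1' q2 q2' ht1 ht2 h1 h2 h12 =>
    replace ht1 : PTrans db dnb lin q1 (.send m) q1' := ht1
    replace ht2 : PTrans db dnb lin q2 (.recv m) q2' := ht2
    cases ht1 <;> cases ht2 <;>
    · obtain ⟨D, rfl, hD⟩ := decomp2 C _ _ (by simp)
        (Multiset.count_pos.mp h1) (Multiset.count_pos.mp h2)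
      rw [hD]
      refine ⟨?_, aux_upd haux
        ((Multiset.le_cons_self D _).trans (Multiset.le_cons_self _ _)) ?_⟩
      · simp only [Multiset.insert_eq_cons, ← Multiset.cons_zero, Multiset.countP_add,
          Multiset.countP_cons, Multiset.countP_zero] at hcount ⊢
        simp_all [isLeader]
        all_goals omega
      · intro δ hδ
        simp only [Multiset.insert_eq_cons, Multiset.mem_cons, Multiset.mem_singleton] at hδ
        rcases hδ with hδ | hδ <;> first
          | (injection hδ with hδ'; rw [hδ']; assumption)
          | simp at hδ

lemma leader_first {db : Set (L × CAct X × L)} {dnb : Set (L × X × L)} {lin : L}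
    {C0 C : Multiset (PState L X)}
    (hinit : ∀ s, s ≠ PState.qin → C0.count s = 0)
    (hstep : NBStep (PTransSet db dnb lin) C0 C) : LeaderInv db C := by
  have hmem : ∀ s, s ∈ C0 → s = PState.qin := by
    intro s hs
    by_contra h
    exact absurd (Multiset.count_pos.mpr hs) (by rw [hinit s h]; simp)
  cases hstep with
  | internal q1 q1' ht hq =>
    replace ht : PTrans db dnb lin q1 .tau q1' := ht
    cases ht with
    | tauStep ℓi ℓj h =>
      have := hmem _ (Multiset.count_pos.mp hq); simp at this
  | rdv m q1 q1' q2 q2' ht1 ht2 h1 h2 h12 =>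
    replace ht1 : PTrans db dnb lin q1 (.send m) q1' := ht1
    replace ht2 : PTrans db dnb lin q2 (.recv m) q2' := ht2
    exfalso
    cases ht1
    case initL =>
      cases ht2 <;> exact absurd (hmem _ (Multiset.count_pos.mp h2)) (by simp)
    all_goals exact absurd (hmem _ (Multiset.count_pos.mp h1)) (by simp)
  | nb m q1 q1' ht h1 hno =>
    replace ht : PTrans db dnb lin q1 (.send m) q1' := ht
    cases ht
    case incSend ℓi x ℓj h => exact absurd (hmem _ (Multiset.count_pos.mp h1)) (by simp)
    case decSend ℓi x ℓj h => exact absurd (hmem _ (Multiset.count_pos.mp h1)) (by simp)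
    case nbdecSend ℓi x ℓj h => exact absurd (hmem _ (Multiset.count_pos.mp h1)) (by simp)
    case qR => exact absurd (hmem _ (Multiset.count_pos.mp h1)) (by simp)
    case incAckSend x => exact absurd (hmem _ (Multiset.count_pos.mp h1)) (by simp)
    case decAckSend x => exact absurd (hmem _ (Multiset.count_pos.mp h1)) (by simp)
    case initL =>
      have h0 : C0.countP (fun s => isLeader s = true) = 0 :=
        Multiset.countP_eq_zero.mpr (by intro a ha; rw [hmem a ha]; simp [isLeader])
      have hle : (C0 - {PState.qin}).countP (fun s => isLeader s = true) = 0 := by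
        have := Multiset.countP_le_of_le (fun s => isLeader s = true)
          (tsub_le_self : C0 - {PState.qin} ≤ C0)
        omega
      constructor
      · rw [Multiset.countP_add, hle]
        rw [← Multiset.cons_zero, Multiset.countP_cons, Multiset.countP_zero]
        simp [isLeader]
      · intro δ hδ
        rcases Multiset.mem_add.mp hδ with h | h
        · have := hmem _ (Multiset.mem_of_le tsub_le_self h); simp at this
        · simp at h

end UniqueLeaderAux

/-- unique leader invariant: in every configuration reachable
in at least one step from an initial configuration, exactly one process is
in `{q} ∪ Q_M`. -/
theorem unique_leader {L X : Type} [DecidableEq L] [DecidableEq X]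
    (db : Set (L × CAct X × L)) (dnb : Set (L × X × L)) (lin : L)
    (hrestore : ∀ ℓ : L, (ℓ, CAct.nop, lin) ∈ db)
    (C0 C : Multiset (PState L X))
    (hinit : ∀ s, s ≠ PState.qin → C0.count s = 0)
    (hreach : Relation.TransGen (NBStep (PTransSet db dnb lin)) C0 C) :
    C.countP (fun s => isLeader s = true) = 1 := by
  suffices h : LeaderInv db C from h.1
  induction hreach with
  | single h => exact leader_first hinit h
  | tail _ h ih => exact leader_pres ih h
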